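/- Let A ∈ ℝ^{m×n} with m < n satisfy the URP, let G satisfy conditions (I)–(II), and let b ∈ ℝᵐ be such that the set {w ∈ ℝⁿ : Aw = b} is nonempty. Then every global minimizer x* of G over {w : Aw = b} satisfies ‖x*‖₀ ≤ m. -/

import Mathlib

open MeasureTheory Filter
open scoped BigOperators

noncomputable section

/-- `l0 w` is the number of nonzero entries of `w`. -/
def l0 {n : ℕ} (w : Fin n → ℝ) : ℕ := (Finset.univ.filter fun i => w i ≠ 0).card

/-- Euclidean (`ℓ²`) norm of a vector. -/
def l2 {k : ℕ} (v : Fin k → ℝ) : ℝ := Real.sqrt (∑ i, v i ^ 2)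

/-- Restriction `h_T` of a vector to a finset `T` (zero outside `T`). -/
def restr {n : ℕ} (T : Finset (Fin n)) (h : Fin n → ℝ) : Fin n → ℝ :=
  fun i => if i ∈ T then h i else 0

/-- Unique Representation Property: every `m` columns of `A` are linearly independent. -/
def URP {m n : ℕ} (A : Matrix (Fin m) (Fin n) ℝ) : Prop :=
  ∀ S : Finset (Fin n), S.card = m →
    LinearIndependent ℝ (fun j : S => (fun i : Fin m => A i (j : Fin n)))

/-- Conditions (I)-(II) on the penalty component `g`. -/
def PenaltyConds (g : ℝ → ℝ) : Prop :=
  g 0 = 0 ∧ (∀ w, g (-w) = g w) ∧ Continuous g ∧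
    ((StrictMonoOn g (Set.Ioi 0) ∧ StrictConcaveOn ℝ (Set.Ioi 0) g) ∨
      (∃ γ : ℝ, 0 < γ ∧ StrictMonoOn g (Set.Ioc 0 γ) ∧
        StrictConcaveOn ℝ (Set.Ioc 0 γ) g ∧ ∀ w, γ ≤ w → g w = g γ))

/-- Spectral (`ℓ² → ℓ²` operator) norm of a matrix. -/
def specNorm {m n : ℕ} (A : Matrix (Fin m) (Fin n) ℝ) : ℝ :=
  sSup {c | ∃ v : Fin n → ℝ, l2 v ≤ 1 ∧ c = l2 (A.mulVec v)}

/-- The `p`-shrinkage function `s_{λ,p}`. -/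
def pshrinkFun (lam p t : ℝ) : ℝ :=
  if t ≤ 0 then 0 else max (t - lam ^ (2 - p) * t ^ (p - 1)) 0

/-- `f_p(x) = ∫₀ˣ s_{λ,p}(t) dt`. -/
def pf (lam p x : ℝ) : ℝ := ∫ t in (0 : ℝ)..x, pshrinkFun lam p t

/-- Legendre–Fenchel transform `f_p*(w) = sup_{x ≥ 0} (x·w − f_p(x))`. -/
def pfstar (lam p w : ℝ) : ℝ := sSup ((fun x => x * w - pf lam p x) '' Set.Ici 0)

/-- The induced `p`-shrinkage penalty component `g_p`. -/
def gp (lam p w : ℝ) : ℝ := (pfstar lam p |w| - w ^ 2 / 2) / lam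

/-- The induced `p`-shrinkage penalty `G_p`. -/
def Gp (lam p : ℝ) {n : ℕ} (w : Fin n → ℝ) : ℝ := ∑ i, gp lam p (w i)

/-- The `p`-shrinkage mapping `S_p`. -/
def Sp (lam p : ℝ) {n : ℕ} (x : Fin n → ℝ) : Fin n → ℝ :=
  fun i => pshrinkFun lam p |x i| * Real.sign (x i)

/-- The objective `F_p(x) = λ G_p(x) + ½‖Ax − b‖₂²`. -/
def Fp (lam p : ℝ) {m n : ℕ} (A : Matrix (Fin m) (Fin n) ℝ) (b : Fin m → ℝ)
    (x : Fin n → ℝ) : ℝ :=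
  lam * Gp lam p x + (1 / 2) * (l2 (A.mulVec x - b)) ^ 2

/-- Firm-thresholding penalty component. -/
def gfirm (μ w : ℝ) : ℝ := if |w| ≤ μ then |w| - w ^ 2 / (2 * μ) else μ / 2

/-- Firm-thresholding penalty. -/
def Gfirm (μ : ℝ) {n : ℕ} (w : Fin n → ℝ) : ℝ := ∑ i, gfirm μ (w i)

/-- The `m × m` submatrix `A_S` of the columns of `A` indexed by `S`. -/
def colsub {m n : ℕ} (A : Matrix (Fin m) (Fin n) ℝ)
    (S : {S : Finset (Fin n) // S.card = m}) : Matrix (Fin m) (Fin m) ℝ :=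
  Matrix.of fun i j => A i ((S.1.orderIsoOfFin S.2 j : Fin n))

/-- `α_S = ‖A_S⁻¹ b‖_{-∞}`. -/
def alphaS {m n : ℕ} (A : Matrix (Fin m) (Fin n) ℝ) (b : Fin m → ℝ)
    (S : {S : Finset (Fin n) // S.card = m}) : ℝ :=
  ⨅ i, |((colsub A S)⁻¹).mulVec b i|

/-- `β_S = ‖A_S⁻¹ b‖_∞`. -/
def betaS {m n : ℕ} (A : Matrix (Fin m) (Fin n) ℝ) (b : Fin m → ℝ)
    (S : {S : Finset (Fin n) // S.card = m}) : ℝ :=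
  ⨆ i, |((colsub A S)⁻¹).mulVec b i|

/-- `‖A_S⁻¹‖` (spectral norm). -/
def nrmInv {m n : ℕ} (A : Matrix (Fin m) (Fin n) ℝ)
    (S : {S : Finset (Fin n) // S.card = m}) : ℝ :=
  specNorm ((colsub A S)⁻¹)

lemma aux_dep {m n : ℕ} (A : Matrix (Fin m) (Fin n) ℝ) (T : Finset (Fin n))
    (hT : m < T.card) :
    ∃ h : Fin n → ℝ, A.mulVec h = 0 ∧ (∀ i, h i ≠ 0 → i ∈ T) ∧ ∃ j, h j ≠ 0 := by
  have hdep : ¬ LinearIndependent ℝ (fun j : T => (fun i : Fin m => A i (j : Fin n))) := by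
    intro hli
    have hc := hli.fintype_card_le_finrank
    simp [Fintype.card_coe] at hc
    omega
  rw [Fintype.not_linearIndependent_iff] at hdep
  obtain ⟨c, hcsum, j0, hj0⟩ := hdep
  refine ⟨fun i => if hi : i ∈ T then c ⟨i, hi⟩ else 0, ?_, ?_, ⟨j0, by simp [j0.2, hj0]⟩⟩
  · funext i
    have := congrFun hcsum i
    simp only [Finset.sum_apply, Pi.smul_apply, smul_eq_mul, Pi.zero_apply] at this
    simp only [Matrix.mulVec, dotProduct, Pi.zero_apply]
    rw [← Finset.sum_subset (Finset.subset_univ T)]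
    · rw [← Finset.sum_attach T]
      rw [← this]
      apply Finset.sum_congr rfl
      intro j _
      simp [j.2, mul_comm]
    · intro x _ hx
      simp [hx]
  · intro i hi
    by_contra hiT
    simp [hiT] at hi

lemma aux_mid {g : ℝ → ℝ} {s : Set ℝ} (hc : StrictConcaveOn ℝ s g) {a d : ℝ}
    (hd : d ≠ 0) (h1 : a + d ∈ s) (h2 : a - d ∈ s) :
    g (a + d) + g (a - d) < 2 * g a := by
  have hne : a + d ≠ a - d := by intro hh; apply hd; linarith
  have := hc.2 h1 h2 hne (by norm_num : (0:ℝ) < 1/2) (by norm_num : (0:ℝ) < 1/2) (by norm_num)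
  have he : (1/2 : ℝ) • (a + d) + (1/2 : ℝ) • (a - d) = a := by
    simp [smul_eq_mul]; ring
  rw [he] at this
  simp only [smul_eq_mul] at this
  linarith

lemma aux_reduce {g : ℝ → ℝ} (heven : ∀ w, g (-w) = g w) {x d : ℝ} (hlt : |d| < |x|) :
    ∃ e : ℝ, |e| = |d| ∧ g (x + d) = g (|x| + e) ∧ g (x - d) = g (|x| - e) := by
  rcases lt_trichotomy x 0 with hx | hx | hx
  · refine ⟨-d, abs_neg d, ?_, ?_⟩
    · rw [abs_of_neg hx]
      have e : -x + -d = -(x + d) := by ring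
      rw [e, heven]
    · rw [abs_of_neg hx]
      have e : -x - -d = -(x - d) := by ring
      rw [e, heven]
  · exfalso; rw [hx, abs_zero] at hlt; exact absurd hlt (not_lt.2 (abs_nonneg d))
  · exact ⟨d, rfl, by rw [abs_of_pos hx], by rw [abs_of_pos hx]⟩

lemma aux_eps {n : ℕ} (j0 : Fin n) (r : Fin n → ℝ) (hr : ∀ i, 0 < r i) :
    ∃ ε : ℝ, 0 < ε ∧ ∀ i, ε ≤ r i := by
  have hne : (Finset.univ : Finset (Fin n)).Nonempty := ⟨j0, Finset.mem_univ _⟩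
  refine ⟨Finset.univ.inf' hne r, ?_, fun i => Finset.inf'_le r (Finset.mem_univ i)⟩
  rw [Finset.lt_inf'_iff]
  exact fun i _ => hr i

lemma aux_final {n : ℕ} {g : ℝ → ℝ} {x h : Fin n → ℝ} {ε : ℝ}
    (hle : ∀ i, g (x i + ε * h i) + g (x i - ε * h i) ≤ 2 * g (x i))
    (j0 : Fin n)
    (hstrict : g (x j0 + ε * h j0) + g (x j0 - ε * h j0) < 2 * g (x j0))
    (h1 : (∑ i, g (x i)) ≤ ∑ i, g (x i + ε * h i))
    (h2 : (∑ i, g (x i)) ≤ ∑ i, g (x i - ε * h i)) : False := by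
  have hsum : ∑ i, (g (x i + ε * h i) + g (x i - ε * h i)) < ∑ i, 2 * g (x i) :=
    Finset.sum_lt_sum (fun i _ => hle i) ⟨j0, Finset.mem_univ _, hstrict⟩
  rw [Finset.sum_add_distrib, ← Finset.mul_sum] at hsum
  linarith

/-- global minimizers of `G` subject to `Aw = b` have at most `m` nonzeros. -/
theorem stmt1 {m n : ℕ} (hmn : m < n) (A : Matrix (Fin m) (Fin n) ℝ) (hA : URP A)
    (g : ℝ → ℝ) (hg : PenaltyConds g) (b : Fin m → ℝ)
    (hne : {w : Fin n → ℝ | A.mulVec w = b}.Nonempty)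
    (xstar : Fin n → ℝ) (hfs : A.mulVec xstar = b)
    (hmin : ∀ w : Fin n → ℝ, A.mulVec w = b → (∑ i, g (xstar i)) ≤ ∑ i, g (w i)) :
    l0 xstar ≤ m := by
  by_contra hcon
  push_neg at hcon
  obtain ⟨hg0, heven, hcont, hcase⟩ := hg
  have hgabs : ∀ w : ℝ, g w = g |w| := by
    intro w
    rcases abs_cases w with ⟨e, _⟩ | ⟨e, _⟩
    · rw [e]
    · rw [e, heven]
  obtain ⟨h, hker, hsupp, j0, hj0⟩ :=
    aux_dep A (Finset.univ.filter fun i => xstar i ≠ 0) (by simpa [l0] using hcon)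
  have hxne : ∀ i, h i ≠ 0 → xstar i ≠ 0 := by
    intro i hi
    have := hsupp i hi
    simpa using this
  have hminφ : ∀ t : ℝ, (∑ i, g (xstar i)) ≤ ∑ i, g (xstar i + t * h i) := by
    intro t
    apply hmin
    have hfe : (fun i => xstar i + t * h i) = xstar + t • h := by
      funext i; simp [mul_comm]
    rw [hfe, Matrix.mulVec_add, Matrix.mulVec_smul, hker, hfs]
    simp
  rcases hcase with ⟨_, hconc⟩ | ⟨γ, hγ, hmono, hconc, hconst⟩
  · -- Case A : strictly concave on (0, ∞)
    obtain ⟨ε, hε, hεle⟩ := aux_eps j0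
      (fun i => if h i = 0 then 1 else |xstar i| / 2 / |h i|)
      (by
        intro i
        by_cases hi : h i = 0
        · simp [hi]
        · rw [if_neg hi]
          exact div_pos (div_pos (abs_pos.2 (hxne i hi)) two_pos) (abs_pos.2 hi))
    have hb : ∀ i, h i ≠ 0 → ε * |h i| < |xstar i| := by
      intro i hi
      have h1 := hεle i
      rw [if_neg hi] at h1
      have hh : (0:ℝ) < |h i| := abs_pos.2 hi
      have hx : (0:ℝ) < |xstar i| := abs_pos.2 (hxne i hi)
      have := (le_div_iff₀ hh).1 h1
      linarith
    have hstrict : ∀ i, h i ≠ 0 →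
        g (xstar i + ε * h i) + g (xstar i - ε * h i) < 2 * g (xstar i) := by
      intro i hi
      have hd : ε * h i ≠ 0 := mul_ne_zero (ne_of_gt hε) hi
      have hlt : |ε * h i| < |xstar i| := by
        rw [abs_mul, abs_of_pos hε]; exact hb i hi
      obtain ⟨e, he, e1, e2⟩ := aux_reduce heven hlt
      have hene : e ≠ 0 := by
        intro h0; rw [h0, abs_zero] at he; exact hd (abs_eq_zero.1 he.symm)
      have helt : |e| < |xstar i| := he ▸ hlt
      obtain ⟨hel, heu⟩ := abs_lt.1 helt
      rw [e1, e2, hgabs (xstar i)]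
      exact aux_mid hconc hene (by simp; linarith) (by simp; linarith)
    have hle : ∀ i, g (xstar i + ε * h i) + g (xstar i - ε * h i) ≤ 2 * g (xstar i) := by
      intro i
      by_cases hi : h i = 0
      · simp [hi, two_mul]
      · exact (hstrict i hi).le
    have h2 := hminφ (-ε)
    simp only [neg_mul, ← sub_eq_add_neg] at h2
    exact aux_final hle j0 (hstrict j0 hj0) (hminφ ε) h2
  · -- Case B : strictly concave on (0, γ], constant beyond γ
    have htend : Tendsto g (nhdsWithin 0 (Set.Ioi 0)) (nhds 0) := by
      have := hcont.tendsto 0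
      rw [hg0] at this
      exact this.mono_left nhdsWithin_le_nhds
    have hmem2 : γ / 2 ∈ Set.Ioc (0:ℝ) γ := Set.mem_Ioc.2 ⟨by linarith, by linarith⟩
    have hg2le : (0:ℝ) ≤ g (γ / 2) := by
      refine le_of_tendsto htend ?_
      have hIoo : Set.Ioo (0:ℝ) (γ / 2) ∈ nhdsWithin (0:ℝ) (Set.Ioi 0) :=
        Ioo_mem_nhdsGT_of_mem (Set.mem_Ico.2 ⟨le_refl (0:ℝ), by linarith⟩)
      filter_upwards [hIoo] with s hs
      exact (hmono (Set.mem_Ioc.2 ⟨hs.1, by linarith [hs.2]⟩) hmem2 hs.2).le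
    have hgpos : (0:ℝ) < g γ := by
      have : g (γ / 2) < g γ :=
        hmono hmem2 (Set.mem_Ioc.2 ⟨hγ, le_refl γ⟩) (by linarith)
      linarith
    have hg0le : (0:ℝ) ≤ g γ := hgpos.le
    have hgle : ∀ w : ℝ, g w ≤ g γ := by
      intro w
      rw [hgabs w]
      rcases lt_or_ge |w| γ with hw | hw
      · rcases eq_or_lt_of_le (abs_nonneg w) with h0 | h0
        · rw [← h0, hg0]; exact hg0le
        · exact (hmono (Set.mem_Ioc.2 ⟨h0, hw.le⟩) (Set.mem_Ioc.2 ⟨hγ, le_refl γ⟩) hw).le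
      · rw [hconst _ hw]
    by_cases hex : ∃ j, h j ≠ 0 ∧ |xstar j| ≤ γ
    · -- local strict concavity argument
      obtain ⟨j1, hj1, hj1γ⟩ := hex
      obtain ⟨ε, hε, hεle⟩ := aux_eps j0
        (fun i => if h i = 0 then 1 else
          (min |xstar i| (if |xstar i| < γ then γ - |xstar i|
            else if γ < |xstar i| then |xstar i| - γ else |xstar i|)) / 2 / |h i|)
        (by
          intro i
          by_cases hi : h i = 0
          · simp [hi]
          · rw [if_neg hi]
            have hx : (0:ℝ) < |xstar i| := abs_pos.2 (hxne i hi)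
            refine div_pos (div_pos ?_ two_pos) (abs_pos.2 hi)
            rcases lt_trichotomy |xstar i| γ with hc | hc | hc
            · simp only [if_pos hc]
              exact lt_min hx (by linarith)
            · rw [hc, if_neg (lt_irrefl γ), if_neg (lt_irrefl γ)]
              simp [hγ]
            · rw [if_neg (not_lt.2 hc.le), if_pos hc]
              exact lt_min hx (by linarith))
      have hb : ∀ i, h i ≠ 0 → ε * |h i| <
          min |xstar i| (if |xstar i| < γ then γ - |xstar i|
            else if γ < |xstar i| then |xstar i| - γ else |xstar i|) := by
        intro i hi
        have h1 := hεle i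
        rw [if_neg hi] at h1
        have hh : (0:ℝ) < |h i| := abs_pos.2 hi
        have := (le_div_iff₀ hh).1 h1
        have hx : (0:ℝ) < |xstar i| := abs_pos.2 (hxne i hi)
        have hminpos : (0:ℝ) < min |xstar i|
            (if |xstar i| < γ then γ - |xstar i|
              else if γ < |xstar i| then |xstar i| - γ else |xstar i|) := by
          refine lt_min hx ?_
          rcases lt_trichotomy |xstar i| γ with hc | hc | hc
          · rw [if_pos hc]; linarith
          · rw [if_neg (by rw [hc]; exact lt_irrefl γ), if_neg (by rw [hc]; exact lt_irrefl γ)]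
            exact hx
          · rw [if_neg (not_lt.2 hc.le), if_pos hc]; linarith
        linarith
      -- per-index inequalities
      have key : ∀ i, h i ≠ 0 →
          g (xstar i + ε * h i) + g (xstar i - ε * h i) ≤ 2 * g (xstar i) ∧
          (|xstar i| ≤ γ → g (xstar i + ε * h i) + g (xstar i - ε * h i) < 2 * g (xstar i)) := by
        intro i hi
        have hbi := hb i hi
        have hd : ε * h i ≠ 0 := mul_ne_zero (ne_of_gt hε) hi
        have hlt : |ε * h i| < |xstar i| := by
          rw [abs_mul, abs_of_pos hε]
          exact lt_of_lt_of_le hbi (min_le_left _ _)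
        obtain ⟨e, he, e1, e2⟩ := aux_reduce heven hlt
        have hene : e ≠ 0 := by
          intro h0; rw [h0, abs_zero] at he; exact hd (abs_eq_zero.1 he.symm)
        have helt : |e| < |xstar i| := he ▸ hlt
        obtain ⟨hel, heu⟩ := abs_lt.1 helt
        have heabs : |e| = ε * |h i| := by rw [he, abs_mul, abs_of_pos hε]
        rw [e1, e2, hgabs (xstar i)]
        rcases lt_trichotomy |xstar i| γ with hc | hc | hc
        · -- |x| < γ : strict concavity on Ioc 0 γ
          have hbd : |e| < γ - |xstar i| := by
            rw [heabs]; exact lt_of_lt_of_le hbi (le_trans (min_le_right _ _) (by rw [if_pos hc]))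
          have hee := abs_lt.1 hbd
          have hs : g (|xstar i| + e) + g (|xstar i| - e) < 2 * g |xstar i| := by
            refine aux_mid hconc hene ?_ ?_
            · exact Set.mem_Ioc.2 ⟨by linarith, by linarith [le_abs_self e]⟩
            · exact Set.mem_Ioc.2 ⟨by linarith, by linarith [neg_abs_le e]⟩
          exact ⟨hs.le, fun _ => hs⟩
        · -- |x| = γ : monotonicity argument
          have hs : g (|xstar i| + e) + g (|xstar i| - e) < 2 * g |xstar i| := by
            rw [hc]
            rcases lt_or_gt_of_ne hene with hneg | hpos
            · have l1 : g (γ + e) < g γ :=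
                hmono (Set.mem_Ioc.2 ⟨by linarith, by linarith⟩)
                  (Set.mem_Ioc.2 ⟨hγ, le_refl γ⟩) (by linarith)
              have l2 : g (γ - e) = g γ := hconst _ (by linarith)
              linarith
            · have l1 : g (γ + e) = g γ := hconst _ (by linarith)
              have l2 : g (γ - e) < g γ :=
                hmono (Set.mem_Ioc.2 ⟨by linarith, by linarith⟩)
                  (Set.mem_Ioc.2 ⟨hγ, le_refl γ⟩) (by linarith)
              linarith
          exact ⟨hs.le, fun _ => hs⟩
        · -- |x| > γ : all relevant values equal g γ
          have hbd : |e| < |xstar i| - γ := by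
            rw [heabs]
            exact lt_of_lt_of_le hbi (le_trans (min_le_right _ _)
              (by rw [if_neg (not_lt.2 hc.le), if_pos hc]))
          have hee := abs_lt.1 hbd
          have l1 : g (|xstar i| + e) = g γ := hconst _ (by linarith)
          have l2 : g (|xstar i| - e) = g γ := hconst _ (by linarith)
          have l3 : g |xstar i| = g γ := hconst _ hc.le
          exact ⟨by rw [l1, l2, l3]; linarith, fun hcon' => absurd hcon' (not_le.2 hc)⟩
      have hle : ∀ i, g (xstar i + ε * h i) + g (xstar i - ε * h i) ≤ 2 * g (xstar i) := by
        intro i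
        by_cases hi : h i = 0
        · simp [hi, two_mul]
        · exact (key i hi).1
      have h2 := hminφ (-ε)
      simp only [neg_mul, ← sub_eq_add_neg] at h2
      exact aux_final hle j1 ((key j1 hj1).2 hj1γ) (hminφ ε) h2
    · -- plateau case : move along kernel to the crossing point
      push_neg at hex
      have ht := hminφ (-(xstar j0 / h j0))
      have hlt : (∑ i, g (xstar i + (-(xstar j0 / h j0)) * h i)) < ∑ i, g (xstar i) := by
        refine Finset.sum_lt_sum (fun i _ => ?_) ⟨j0, Finset.mem_univ _, ?_⟩
        · by_cases hi : h i = 0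
          · simp [hi]
          · rw [hgabs (xstar i), hconst _ (hex i hi).le]
            exact hgle _
        · have hz : xstar j0 + (-(xstar j0 / h j0)) * h j0 = 0 := by
            field_simp
            ring
          rw [hz, hg0, hgabs (xstar j0), hconst _ (hex j0 hj0).le]
          exact hgpos
      linarith


end
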